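/- arXiv:0811.0129 — 2 statements merged into one kernel-verified Lean document; each statement's English description precedes it below -/
import Mathlib

section
/- Let K be a field, q ∈ K not a root of unity, and m ≥ 0. There exists an (m+1)-dimensional simple module L over the rank-one algebra U_i with basis v_0, ..., v_m such that ω·v_j = φ q^{-j} v_j, ω'·v_j = φ q^{j-m} v_j, f·v_j = v_{j+1} (with v_{m+1} = 0), and e·v_j = φ q^{-m+1}(m-j+1)_q (j)_q v_{j-1} (with v_{-1} = 0), for any nonzero φ ∈ K. In particular the given formulas define a U_i-module structure on K^{m+1}. -/
/-- The `t`-integer `(k)_t = 1 + t + ⋯ + t^{k-1}`. -/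
def qint {K : Type*} [Field K] (t : K) (k : ℕ) : K :=
  ∑ i ∈ Finset.range k, t ^ i

section FinDim

variable {K : Type*} [Field K] (q φ : K) (m : ℕ)

/-- `ω · v_j = φ q^{-j} v_j` on the `(m+1)`-dimensional module. -/
noncomputable def Wmat : Matrix (Fin (m + 1)) (Fin (m + 1)) K :=
  Matrix.diagonal fun j => φ * q⁻¹ ^ (j : ℕ)

/-- `ω' · v_j = φ q^{j-m} v_j` on the `(m+1)`-dimensional module. -/
noncomputable def W'mat : Matrix (Fin (m + 1)) (Fin (m + 1)) K :=
  Matrix.diagonal fun j => φ * q ^ (j : ℕ) * (q ^ m)⁻¹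

/-- `f · v_j = v_{j+1}` (with `v_{m+1} = 0`). -/
def Fmat : Matrix (Fin (m + 1)) (Fin (m + 1)) K :=
  Matrix.of fun i j => if (i : ℕ) = (j : ℕ) + 1 then 1 else 0

/-- `e · v_j = φ q^{-m+1} (m-j+1)_q (j)_q v_{j-1}` (with `v_{-1} = 0`). -/
noncomputable def Emat : Matrix (Fin (m + 1)) (Fin (m + 1)) K :=
  Matrix.of fun i j =>
    if (i : ℕ) + 1 = (j : ℕ) then
      φ * q * (q ^ m)⁻¹ * qint q (m - (j : ℕ) + 1) * qint q (j : ℕ)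
    else 0

namespace Stmt8Aux

/-- The coefficient of `e` acting on `v_j`. -/
noncomputable def cval : K := φ * q * (q ^ m)⁻¹ * qint q (m - (0:ℕ) + 1) * qint q (0:ℕ)

noncomputable def cv (q φ : K) (m j : ℕ) : K :=
  φ * q * (q ^ m)⁻¹ * qint q (m - j + 1) * qint q j

lemma qint_zero : qint q 0 = 0 := by simp [qint]

lemma cv_zero : cv q φ m 0 = 0 := by simp [cv, qint_zero]

lemma qint_eq (hq1 : q ≠ 1) (k : ℕ) : qint q k = (q ^ k - 1) / (q - 1) := by
  rw [qint, geom_sum_eq hq1]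

lemma qint_ne_zero (hq1 : q ≠ 1) {k : ℕ} (hk : q ^ k ≠ 1) : qint q k ≠ 0 := by
  rw [qint_eq q hq1]
  exact div_ne_zero (sub_ne_zero.2 hk) (sub_ne_zero.2 hq1)

lemma Fmat_apply (i j : Fin (m + 1)) :
    Fmat (K := K) m i j = if (i : ℕ) = (j : ℕ) + 1 then 1 else 0 := rfl

lemma Emat_apply (i j : Fin (m + 1)) :
    Emat q φ m i j = if (i : ℕ) + 1 = (j : ℕ) then cv q φ m (j : ℕ) else 0 := rfl

lemma mul_F_apply (M : Matrix (Fin (m + 1)) (Fin (m + 1)) K) (i j : Fin (m + 1)) :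
    (M * Fmat (K := K) m) i j =
      if h : (j : ℕ) + 1 < m + 1 then M i ⟨(j : ℕ) + 1, h⟩ else 0 := by
  rw [Matrix.mul_apply]
  split
  · next h =>
    rw [Finset.sum_eq_single (⟨(j : ℕ) + 1, h⟩ : Fin (m + 1))]
    · rw [Fmat_apply, if_pos rfl, mul_one]
    · intro k _ hk
      rw [Fmat_apply, if_neg, mul_zero]
      exact fun hkj => hk (Fin.ext hkj)
    · simp
  · next h =>
    apply Finset.sum_eq_zero
    intro k _
    rw [Fmat_apply, if_neg, mul_zero]
    intro hkj
    exact h (hkj ▸ k.isLt)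

lemma F_mul_apply (M : Matrix (Fin (m + 1)) (Fin (m + 1)) K) (i j : Fin (m + 1)) :
    (Fmat (K := K) m * M) i j =
      if 0 < (i : ℕ) then
        M ⟨(i : ℕ) - 1, lt_of_le_of_lt (Nat.sub_le _ _) i.isLt⟩ j else 0 := by
  rw [Matrix.mul_apply]
  split
  · next h =>
    rw [Finset.sum_eq_single (⟨(i : ℕ) - 1, lt_of_le_of_lt (Nat.sub_le _ _) i.isLt⟩ :
        Fin (m + 1))]
    · rw [Fmat_apply, if_pos (by simp; omega), one_mul]
    · intro k _ hk
      rw [Fmat_apply, if_neg, zero_mul]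
      intro hik
      exact hk (Fin.ext (by simp; omega))
    · simp
  · next h =>
    apply Finset.sum_eq_zero
    intro k _
    rw [Fmat_apply, if_neg, zero_mul]
    omega

lemma key_diag (hq0 : q ≠ 0) (hq1 : q ≠ 1) {i : ℕ} (him : i < m) :
    cv q φ m (i + 1) - cv q φ m i
      = q / (q - 1) * (φ * q⁻¹ ^ i - φ * q ^ i * (q ^ m)⁻¹) := by
  have h1 : m - (i + 1) + 1 = m - i := by omega
  have hm : q ^ m = q ^ (m - i) * q ^ i := by rw [← pow_add]; congr 1; omega
  have h2 : q ^ (m - i + 1) = q ^ (m - i) * q := pow_succ _ _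
  have h3 : q ^ (i + 1) = q ^ i * q := pow_succ _ _
  have ha : q ^ i ≠ 0 := pow_ne_zero _ hq0
  have hb : q ^ (m - i) ≠ 0 := pow_ne_zero _ hq0
  have hq1' : q - 1 ≠ 0 := sub_ne_zero.2 hq1
  rw [cv, cv, h1, qint_eq q hq1, qint_eq q hq1, qint_eq q hq1, qint_eq q hq1,
    hm, h2, h3, inv_pow]
  field_simp
  ring

lemma key_diag_top (hq0 : q ≠ 0) (hq1 : q ≠ 1) :
    (0 : K) - cv q φ m m
      = q / (q - 1) * (φ * q⁻¹ ^ m - φ * q ^ m * (q ^ m)⁻¹) := by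
  have ha : q ^ m ≠ 0 := pow_ne_zero _ hq0
  have hq1' : q - 1 ≠ 0 := sub_ne_zero.2 hq1
  rw [cv, Nat.sub_self, qint_eq q hq1, qint_eq q hq1, inv_pow]
  field_simp
  ring

end Stmt8Aux


section Main
open Stmt8Aux

variable {K : Type*} [Field K]

lemma pow_inj (q : K) (hq0 : q ≠ 0) (hq : ∀ n : ℕ, 0 < n → q ^ n ≠ 1)
    {a b : ℕ} (hab : q⁻¹ ^ a = q⁻¹ ^ b) : a = b := by
  have hqi : q⁻¹ ≠ 0 := inv_ne_zero hq0
  have key : ∀ a b : ℕ, a ≤ b → q⁻¹ ^ a = q⁻¹ ^ b → a = b := by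
    intro a b hle h
    have hb : q⁻¹ ^ b = q⁻¹ ^ a * q⁻¹ ^ (b - a) := by
      rw [← pow_add]; congr 1; omega
    rw [hb] at h
    nth_rewrite 1 [show q⁻¹ ^ a = q⁻¹ ^ a * 1 by ring] at h
    have h1 : (1 : K) = q⁻¹ ^ (b - a) := mul_left_cancel₀ (pow_ne_zero _ hqi) h
    have h2 : q ^ (b - a) = 1 := by
      have h3 : (q ^ (b - a))⁻¹ = 1 := by rw [← inv_pow]; exact h1.symm
      exact inv_eq_one.mp h3
    by_contra hne
    exact hq (b - a) (by omega) h2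
  rcases le_total a b with h | h
  · exact key a b h hab
  · exact (key b a h hab.symm).symm

theorem finite_dimensional_simple_module' {K : Type*} [Field K]
    (q φ : K) (hq0 : q ≠ 0) (hq : ∀ n : ℕ, 0 < n → q ^ n ≠ 1) (hφ : φ ≠ 0)
    (m : ℕ) :
    Wmat q φ m * W'mat q φ m = W'mat q φ m * Wmat q φ m ∧
    Wmat q φ m * Emat q φ m = q • (Emat q φ m * Wmat q φ m) ∧
    W'mat q φ m * Emat q φ m = q⁻¹ • (Emat q φ m * W'mat q φ m) ∧
    Wmat q φ m * Fmat (K := K) m = q⁻¹ • (Fmat (K := K) m * Wmat q φ m) ∧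
    W'mat q φ m * Fmat (K := K) m = q • (Fmat (K := K) m * W'mat q φ m) ∧
    Emat q φ m * Fmat (K := K) m - Fmat (K := K) m * Emat q φ m
      = (q / (q - 1)) • (Wmat q φ m - W'mat q φ m) ∧
    IsUnit (Wmat q φ m) ∧ IsUnit (W'mat q φ m) ∧
    (∀ N : Submodule K (Fin (m + 1) → K),
      (∀ x ∈ N, (Emat q φ m).mulVec x ∈ N ∧ (Fmat (K := K) m).mulVec x ∈ N ∧
        (Wmat q φ m).mulVec x ∈ N ∧ (W'mat q φ m).mulVec x ∈ N) →
      N = ⊥ ∨ N = ⊤) := by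
  have hq1 : q ≠ 1 := by simpa using hq 1 one_pos
  have hqm : (q : K) ^ m ≠ 0 := pow_ne_zero _ hq0
  refine ⟨?_, ?_, ?_, ?_, ?_, ?_, ?_, ?_, ?_⟩
  · -- W W' commute
    ext i j
    rw [Wmat, W'mat, Matrix.diagonal_mul_diagonal, Matrix.diagonal_mul_diagonal,
      Matrix.diagonal_apply, Matrix.diagonal_apply]
    split
    · ring
    · rfl
  · -- W E = q (E W)
    ext i j
    rw [Wmat, Matrix.diagonal_mul, Matrix.smul_apply, Matrix.mul_diagonal,
      Emat_apply]
    split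
    · next h =>
      set c := cv q φ m (j : ℕ) with hc
      rw [← h, pow_succ, smul_eq_mul]
      have hqq : q * q⁻¹ = 1 := mul_inv_cancel₀ hq0
      linear_combination (-(c * φ * q⁻¹ ^ (i : ℕ))) * hqq
    · simp
  · -- W' E = q⁻¹ (E W')
    ext i j
    rw [W'mat, Matrix.diagonal_mul, Matrix.smul_apply, Matrix.mul_diagonal,
      Emat_apply]
    split
    · next h =>
      set c := cv q φ m (j : ℕ) with hc
      rw [← h, pow_succ, smul_eq_mul]
      have hqq : q⁻¹ * q = 1 := inv_mul_cancel₀ hq0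
      linear_combination (-(c * φ * q ^ (i : ℕ) * (q ^ m)⁻¹)) * hqq
    · simp
  · -- W F = q⁻¹ (F W)
    ext i j
    rw [Wmat, Matrix.diagonal_mul, Matrix.smul_apply, Matrix.mul_diagonal,
      Fmat_apply]
    split
    · next h =>
      rw [h, pow_succ, smul_eq_mul]
      ring
    · simp
  · -- W' F = q (F W')
    ext i j
    rw [W'mat, Matrix.diagonal_mul, Matrix.smul_apply, Matrix.mul_diagonal,
      Fmat_apply]
    split
    · next h =>
      rw [h, pow_succ, smul_eq_mul]
      ring
    · simp
  · -- EF - FE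
    ext i j
    rw [Matrix.sub_apply, mul_F_apply, F_mul_apply, Matrix.smul_apply,
      Matrix.sub_apply, Wmat, W'mat, Matrix.diagonal_apply, Matrix.diagonal_apply]
    by_cases hij : i = j
    · subst hij
      rw [if_pos rfl, if_pos rfl]
      have hFE : (if 0 < (i : ℕ) then
          Emat q φ m ⟨(i : ℕ) - 1, lt_of_le_of_lt (Nat.sub_le _ _) i.isLt⟩ i else 0)
          = cv q φ m (i : ℕ) := by
        split
        · next h =>
          rw [Emat_apply, if_pos (by simp; omega)]
        · next h =>
          have : (i : ℕ) = 0 := by omega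
          rw [this, cv_zero]
      rw [hFE]
      by_cases him : (i : ℕ) < m
      · rw [dif_pos (by omega : (i : ℕ) + 1 < m + 1), Emat_apply, if_pos rfl]
        have := key_diag q φ m hq0 hq1 him
        simp only [smul_eq_mul]
        convert this using 2
      · have hi : (i : ℕ) = m := by omega
        rw [dif_neg (by omega), hi]
        have := key_diag_top q φ m hq0 hq1
        simp only [smul_eq_mul]
        convert this using 2
    · rw [if_neg hij, if_neg hij, sub_zero, smul_zero]
      have h1 : (if h : (j : ℕ) + 1 < m + 1 then
          Emat q φ m i ⟨(j : ℕ) + 1, h⟩ else 0) = 0 := by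
        split
        · rw [Emat_apply, if_neg]
          intro h
          have h' : (i : ℕ) + 1 = (j : ℕ) + 1 := h
          exact hij (Fin.ext (by omega))
        · rfl
      have h2 : (if 0 < (i : ℕ) then
          Emat q φ m ⟨(i : ℕ) - 1, lt_of_le_of_lt (Nat.sub_le _ _) i.isLt⟩ j else 0)
          = 0 := by
        split
        · next h =>
          rw [Emat_apply, if_neg]
          simp only [Fin.ext_iff] at hij
          intro h'
          have h'' : (i : ℕ) - 1 + 1 = (j : ℕ) := h'
          omega
        · rfl
      rw [h1, h2, sub_zero]
  · rw [Matrix.isUnit_iff_isUnit_det, Wmat, Matrix.det_diagonal, isUnit_iff_ne_zero]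
    exact Finset.prod_ne_zero_iff.2 fun j _ =>
      mul_ne_zero hφ (pow_ne_zero _ (inv_ne_zero hq0))
  · rw [Matrix.isUnit_iff_isUnit_det, W'mat, Matrix.det_diagonal, isUnit_iff_ne_zero]
    exact Finset.prod_ne_zero_iff.2 fun j _ =>
      mul_ne_zero (mul_ne_zero hφ (pow_ne_zero _ hq0)) (inv_ne_zero hqm)
  · intro N hN
    by_cases hbot : N = ⊥
    · exact Or.inl hbot
    right
    classical
    have hW : ∀ x : Fin (m + 1) → K, ∀ i : Fin (m + 1),
        (Wmat q φ m).mulVec x i = φ * q⁻¹ ^ (i : ℕ) * x i := by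
      intro x i
      rw [Wmat, Matrix.mulVec_diagonal]
    have hcv : ∀ t : ℕ, 1 ≤ t → t ≤ m → cv q φ m t ≠ 0 := by
      intro t ht htm
      refine mul_ne_zero (mul_ne_zero (mul_ne_zero (mul_ne_zero hφ hq0)
        (inv_ne_zero hqm)) ?_) ?_
      · exact qint_ne_zero q hq1 (hq _ (by omega))
      · exact qint_ne_zero q hq1 (hq _ ht)
    -- Step 1: N contains a standard basis vector
    have hsingle : ∃ j : Fin (m + 1), Pi.single j (1 : K) ∈ N := by
      obtain ⟨x, hxN, hx0⟩ := (Submodule.ne_bot_iff N).1 hbot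
      have main : ∀ n : ℕ, ∀ x : Fin (m + 1) → K, x ∈ N → x ≠ 0 →
          (Finset.univ.filter fun i => x i ≠ 0).card ≤ n →
          ∃ j : Fin (m + 1), Pi.single j (1 : K) ∈ N := by
        intro n
        induction n with
        | zero =>
          intro x hxN hx0 hcard
          exfalso
          apply hx0
          funext i
          by_contra hi
          have hmem : i ∈ Finset.univ.filter fun i => x i ≠ 0 :=
            Finset.mem_filter.2 ⟨Finset.mem_univ _, hi⟩
          have := Finset.card_pos.2 ⟨i, hmem⟩
          omega
        | succ n ih =>
          intro x hxN hx0 hcard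
          by_cases hsing : ∃ j : Fin (m + 1), ∀ i, i ≠ j → x i = 0
          · obtain ⟨j, hj⟩ := hsing
            have hxj : x j ≠ 0 := by
              intro h
              apply hx0
              funext i
              by_cases hi : i = j
              · rw [hi]; exact h
              · exact hj i hi
            refine ⟨j, ?_⟩
            have hx : Pi.single j (1 : K) = (x j)⁻¹ • x := by
              funext i
              rw [Pi.smul_apply, smul_eq_mul]
              by_cases hi : i = j
              · subst hi
                rw [Pi.single_eq_same, inv_mul_cancel₀ hxj]
              · rw [Pi.single_eq_of_ne hi, hj i hi, mul_zero]
            rw [hx]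
            exact N.smul_mem _ hxN
          · push_neg at hsing
            have hex : ∃ j, x j ≠ 0 := by
              by_contra hc
              push_neg at hc
              exact hx0 (funext hc)
            obtain ⟨j, hj⟩ := hex
            obtain ⟨l, hlj, hl⟩ := hsing j
            set y : Fin (m + 1) → K :=
              fun i => (φ * q⁻¹ ^ (i : ℕ) - φ * q⁻¹ ^ (l : ℕ)) * x i with hy
            have hyN : y ∈ N := by
              have h1 := (hN x hxN).2.2.1
              have h2 : y = (Wmat q φ m).mulVec x - (φ * q⁻¹ ^ (l : ℕ)) • x := by
                funext i
                rw [Pi.sub_apply, Pi.smul_apply, hW, smul_eq_mul, hy]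
                ring
              rw [h2]
              exact N.sub_mem h1 (N.smul_mem _ hxN)
            have hdne : φ * q⁻¹ ^ (j : ℕ) - φ * q⁻¹ ^ (l : ℕ) ≠ 0 := by
              exact sub_ne_zero.2 fun h =>
                hlj (Fin.ext (pow_inj q hq0 hq (mul_left_cancel₀ hφ h)).symm)
            have hyj : y j ≠ 0 := mul_ne_zero hdne hj
            have hy0 : y ≠ 0 := fun h => hyj (by rw [h]; rfl)
            have hsub : (Finset.univ.filter fun i => y i ≠ 0) ⊆
                Finset.univ.filter fun i => x i ≠ 0 := by
              intro k hk
              simp only [Finset.mem_filter, Finset.mem_univ, true_and] at hk ⊢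
              intro hxk
              exact hk (by rw [hy]; simp [hxk])
            have hss : (Finset.univ.filter fun i => y i ≠ 0) ⊂
                Finset.univ.filter fun i => x i ≠ 0 := by
              refine (Finset.ssubset_iff_of_subset hsub).2 ⟨l, ?_, ?_⟩
              · exact Finset.mem_filter.2 ⟨Finset.mem_univ _, hl⟩
              · simp only [Finset.mem_filter, Finset.mem_univ, true_and, not_not]
                rw [hy]
                simp
            have hcard' := Finset.card_lt_card hss
            exact ih y hyN hy0 (by omega)
      exact main _ x hxN hx0 le_rfl
    -- Step 2: go up to the last basis vector with F
    have hup : ∀ k : ℕ, ∀ j : Fin (m + 1), (j : ℕ) + k = m →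
        Pi.single j (1 : K) ∈ N → Pi.single (Fin.last m) (1 : K) ∈ N := by
      intro k
      induction k with
      | zero =>
        intro j hj hjN
        have : j = Fin.last m := Fin.ext (by simp only [Fin.val_last]; omega)
        rwa [← this]
      | succ k ih =>
        intro j hj hjN
        have hlt : (j : ℕ) + 1 < m + 1 := by omega
        have hF := (hN _ hjN).2.1
        rw [Matrix.mulVec_single] at hF
        have heq : (fun i => Fmat (K := K) m i j * 1)
            = Pi.single (⟨(j : ℕ) + 1, hlt⟩ : Fin (m + 1)) (1 : K) := by
          funext i
          rw [mul_one, Fmat_apply, Pi.single_apply]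
          by_cases h : (i : ℕ) = (j : ℕ) + 1
          · rw [if_pos h, if_pos (Fin.ext h)]
          · rw [if_neg h, if_neg fun hc => h (by rw [hc])]
        rw [show MulOpposite.op (1 : K) • (Fmat (K := K) m).col j
            = fun i => Fmat (K := K) m i j * 1 by ext i; simp, heq] at hF
        exact ih ⟨(j : ℕ) + 1, hlt⟩ (by simp; omega) hF
    -- Step 3: go down with E
    have hdown : ∀ k : ℕ, k ≤ m → ∀ j : Fin (m + 1), (j : ℕ) = m - k →
        Pi.single j (1 : K) ∈ N := by
      intro k
      induction k with
      | zero =>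
        intro _ j hj
        obtain ⟨j0, hj0⟩ := hsingle
        have hlast := hup (m - (j0 : ℕ)) j0 (by omega) hj0
        have : j = Fin.last m := Fin.ext (by simp only [Fin.val_last]; omega)
        rwa [this]
      | succ k ih =>
        intro hk j hj
        have hprev := ih (by omega) ⟨m - k, by omega⟩ rfl
        have hE := (hN _ hprev).1
        rw [Matrix.mulVec_single] at hE
        have hmk : 1 ≤ m - k := by omega
        have heq : (fun i => Emat q φ m i (⟨m - k, by omega⟩ : Fin (m + 1)) * 1)
            = cv q φ m (m - k) • (Pi.single j (1 : K) : Fin (m + 1) → K) := by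
          funext i
          rw [mul_one, Pi.smul_apply, Pi.single_apply, Emat_apply]
          by_cases h : (i : ℕ) + 1 = m - k
          · rw [if_pos h, if_pos (Fin.ext (show (i : ℕ) = (j : ℕ) by omega))]
            rw [smul_eq_mul, mul_one]
          · rw [if_neg h, if_neg, smul_zero]
            intro hc
            apply h
            have : (i : ℕ) = (j : ℕ) := by rw [hc]
            omega
        rw [show MulOpposite.op (1 : K) • (Emat q φ m).col (⟨m - k, by omega⟩ : Fin (m + 1))
            = fun i => Emat q φ m i (⟨m - k, by omega⟩ : Fin (m + 1)) * 1 by ext i; simp,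
          heq] at hE
        have hc0 : cv q φ m (m - k) ≠ 0 := hcv _ hmk (by omega)
        have := N.smul_mem (cv q φ m (m - k))⁻¹ hE
        rwa [smul_smul, inv_mul_cancel₀ hc0, one_smul] at this
    have hall : ∀ j : Fin (m + 1), Pi.single j (1 : K) ∈ N :=
      fun j => hdown (m - (j : ℕ)) (by omega) j (by omega)
    rw [Submodule.eq_top_iff']
    intro x
    have hx : x = ∑ i : Fin (m + 1), x i • (Pi.single i (1 : K) : Fin (m + 1) → K) := by
      conv_lhs => rw [← Finset.univ_sum_single x]
      refine Finset.sum_congr rfl fun i _ => ?_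
      funext k
      rw [Pi.smul_apply, Pi.single_apply, Pi.single_apply, smul_eq_mul]
      split <;> simp
    rw [hx]
    exact Submodule.sum_mem _ fun i _ => N.smul_mem _ (hall i)

end Main

/-- for `q` not a root of unity and `φ ≠ 0`, the explicit formulas
above define a `(m+1)`-dimensional simple module over the rank-one algebra
`U_i`: the four operators satisfy the defining relations of `U_i` (with `ω, ω'`
invertible), and every invariant subspace is `⊥` or `⊤`. -/
theorem finite_dimensional_simple_module {K : Type*} [Field K]
    (q φ : K) (hq0 : q ≠ 0) (hq : ∀ n : ℕ, 0 < n → q ^ n ≠ 1) (hφ : φ ≠ 0)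
    (m : ℕ) :
    Wmat q φ m * W'mat q φ m = W'mat q φ m * Wmat q φ m ∧
    Wmat q φ m * Emat q φ m = q • (Emat q φ m * Wmat q φ m) ∧
    W'mat q φ m * Emat q φ m = q⁻¹ • (Emat q φ m * W'mat q φ m) ∧
    Wmat q φ m * Fmat (K := K) m = q⁻¹ • (Fmat (K := K) m * Wmat q φ m) ∧
    W'mat q φ m * Fmat (K := K) m = q • (Fmat (K := K) m * W'mat q φ m) ∧
    Emat q φ m * Fmat (K := K) m - Fmat (K := K) m * Emat q φ m
      = (q / (q - 1)) • (Wmat q φ m - W'mat q φ m) ∧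
    IsUnit (Wmat q φ m) ∧ IsUnit (W'mat q φ m) ∧
    (∀ N : Submodule K (Fin (m + 1) → K),
      (∀ x ∈ N, (Emat q φ m).mulVec x ∈ N ∧ (Fmat (K := K) m).mulVec x ∈ N ∧
        (Wmat q φ m).mulVec x ∈ N ∧ (W'mat q φ m).mulVec x ∈ N) →
      N = ⊥ ∨ N = ⊤) := by
  exact finite_dimensional_simple_module' q φ hq0 hq hφ m

end FinDim
end

section
/- For i ≠ j, the element u_{ij}^- = ∑_{k=0}^{1-a_{ij}} (-1)^k binom(1-a_{ij},k)_{q_{ii}} q_{ii}^{k(k-1)/2} q_{ij}^k f_i^k f_j f_i^{1-a_{ij}-k} in Ũ_q(g) satisfies Δ(u_{ij}^-) = u_{ij}^- ⊗ ω_i'^{1-a_{ij}} ω_j' + 1 ⊗ u_{ij}^-. -/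
open TensorProduct

/-- The Gaussian binomial coefficient `binom(n,k)_t`, via the Pascal recursion
`binom(n,k)_t = t^k binom(n-1,k)_t + binom(n-1,k-1)_t`. -/
def qbinom {K : Type*} [Field K] (t : K) : ℕ → ℕ → K
  | _, 0 => 1
  | 0, _ + 1 => 0
  | n + 1, k + 1 => t ^ (k + 1) * qbinom t n (k + 1) + qbinom t n k

/-- The quantum Serre element
`u_{ij}^- = ∑_{k=0}^{N} (-1)^k binom(N,k)_{q_{ii}} q_{ii}^{k(k-1)/2} q_{ij}^k
f_i^k f_j f_i^{N-k}` with `N = 1 - a_{ij}`. -/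
def serreMinus {K H I : Type*} [Field K] [Ring H] [Module K H]
    (qm : I → I → K) (f : I → H) (N : ℕ) (i j : I) : H :=
  ∑ k ∈ Finset.range (N + 1),
    ((-1 : K) ^ k * qbinom (qm i i) N k * qm i i ^ (k * (k - 1) / 2) * qm i j ^ k) •
      (f i ^ k * f j * f i ^ (N - k))

set_option maxHeartbeats 1000000

section Aux
variable {K : Type*} [Field K] (t : K)

@[simp] lemma qbinom_zero_right (n : ℕ) : qbinom t n 0 = 1 := by
  cases n <;> rfl

@[simp] lemma qbinom_zero_succ (k : ℕ) : qbinom t 0 (k+1) = 0 := rfl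

lemma qbinom_succ_succ (n k : ℕ) :
    qbinom t (n+1) (k+1) = t ^ (k+1) * qbinom t n (k+1) + qbinom t n k := rfl

lemma qbinom_eq_zero : ∀ {n k : ℕ}, n < k → qbinom t n k = 0 := by
  intro n
  induction n with
  | zero => intro k h; match k, h with | k+1, _ => rfl
  | succ n ih =>
    intro k h
    match k, h with
    | k+1, h =>
      rw [qbinom_succ_succ, ih (by omega), ih (by omega)]
      ring

@[simp] lemma qbinom_self : ∀ n : ℕ, qbinom t n n = 1 := by
  intro n
  induction n with
  | zero => rfl
  | succ n ih =>
    rw [qbinom_succ_succ, ih, qbinom_eq_zero t (by omega)]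
    ring

lemma qbinom_ratio : ∀ (n k : ℕ),
    (t ^ (k+1) - 1) * qbinom t n (k+1) = (t ^ (n-k) - 1) * qbinom t n k := by
  intro n
  induction n with
  | zero =>
    intro k
    simp
  | succ n ih =>
    intro k
    rcases Nat.lt_or_ge n k with h | h
    · -- k ≥ n+1 : both sides zero? k ≥ n+1 means k+1 > n+1 so LHS qbinom = 0;
      -- RHS : if k > n+1, qbinom (n+1) k = 0 ; if k = n+1, t^(n+1-k)-1 = 0
      rcases Nat.lt_or_ge (n+1) k with h2 | h2
      · rw [qbinom_eq_zero t (by omega), qbinom_eq_zero t (by omega)]; ring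
      · have hk : k = n+1 := by omega
        subst hk
        rw [qbinom_eq_zero t (by omega), qbinom_self]
        simp [Nat.sub_self]
    · -- k ≤ n
      cases k with
      | zero =>
        rw [qbinom_succ_succ]
        simp only [qbinom_zero_right]
        have h1 := ih 0
        rw [qbinom_zero_right, Nat.sub_zero] at h1
        have hn : n + 1 - 0 = n + 1 := by omega
        rw [hn, pow_succ]
        linear_combination t * h1
      | succ k' =>
        rw [qbinom_succ_succ, qbinom_succ_succ]
        have ih1 := ih (k'+1)
        have ih2 := ih k'
        have e1 : n + 1 - (k'+1) = (n - (k'+1)) + 1 := by omega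
        have e2 : n - k' = (n - (k'+1)) + 1 := by omega
        rw [e1]
        rw [e2] at ih2
        linear_combination (t^(k'+2)) * ih1 + ih2

lemma qbinom_pascal₂ (n k : ℕ) (h : k ≤ n) :
    qbinom t (n+1) (k+1) = qbinom t n (k+1) + t ^ (n-k) * qbinom t n k := by
  have hr := qbinom_ratio t (n+1) k
  have hd := qbinom_succ_succ t n k
  -- (t^(k+1)-1) * C(n+1,k+1) = (t^(n+1-k)-1) * C(n+1,k)
  -- C(n+1,k+1) = t^(k+1) C(n,k+1) + C(n,k)
  -- want C(n+1,k+1) = C(n,k+1) + t^(n-k) C(n,k)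
  -- subtract : (t^(k+1)-1) C(n,k+1) = (t^(n-k)-1) C(n,k)  [ratio at level n]
  have hrn := qbinom_ratio t n k
  -- from hd and hrn derive goal directly:
  -- t^(k+1) C(n,k+1) + C(n,k) - C(n,k+1) - t^(n-k) C(n,k)
  --   = (t^(k+1)-1)C(n,k+1) - (t^(n-k)-1)C(n,k) = 0
  rw [hd]
  linear_combination hrn

lemma qbinom_symm : ∀ (n k : ℕ), k ≤ n → qbinom t n (n-k) = qbinom t n k := by
  intro n
  induction n with
  | zero => intro k h; interval_cases k; rfl
  | succ n ih =>
    intro k hk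
    cases k with
    | zero => simp
    | succ k =>
      rcases Nat.eq_or_lt_of_le hk with h | h
      · rw [← h]; simp
      · have hkn : k + 1 ≤ n := by omega
        have e1 : n + 1 - (k+1) = (n - (k+1)) + 1 := by omega
        have e2 : n - (k+1) + 1 = n - k := by omega
        rw [e1, qbinom_succ_succ, qbinom_pascal₂ t n k (by omega), e2,
            ih k (by omega), ih (k+1) (by omega)]
        ring

lemma qbinom_trinom : ∀ (n k a : ℕ), a ≤ k →
    qbinom t n k * qbinom t k a = qbinom t n a * qbinom t (n-a) (k-a) := by
  intro n
  induction n with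
  | zero =>
    intro k a ha
    cases a with
    | zero => simp
    | succ a' =>
      rw [qbinom_eq_zero t (n := 0) (k := a'+1) (by omega),
          qbinom_eq_zero t (n := 0) (k := k) (by omega)]
      ring
  | succ n ih =>
    intro k a ha
    rcases Nat.lt_or_ge (n+1) k with hk | hk
    · -- k > n+1 : both sides 0
      rw [qbinom_eq_zero t hk]
      rcases Nat.lt_or_ge (n+1) a with haa | haa
      · rw [qbinom_eq_zero t haa]; ring
      · rw [qbinom_eq_zero t (n := n+1-a) (k := k-a) (by omega)]; ring
    · cases k with
      | zero => interval_cases a; simp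
      | succ k' =>
        cases a with
        | zero => simp
        | succ a' =>
          rcases Nat.eq_or_lt_of_le ha with h | h
          · rw [h]; simp [Nat.sub_self]
          · have ha'k' : a' < k' := by omega
            have hk'n : k' ≤ n := by omega
            set E := k' - (a'+1) with hE
            have e1 : n + 1 - (a'+1) = (n - (a'+1)) + 1 := by omega
            have e2 : k' + 1 - (a'+1) = E + 1 := by omega
            rw [e1, e2, qbinom_succ_succ t n k', qbinom_succ_succ t k' a',
                qbinom_succ_succ t n a', qbinom_succ_succ t (n - (a'+1)) E]
            have i1 := ih (k'+1) (a'+1) (by omega)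
            have i2 := ih k' (a'+1) (by omega)
            have i3 := ih k' a' (by omega)
            rw [show k'+1-(a'+1) = E + 1 from by omega] at i1
            rw [qbinom_succ_succ t k' a'] at i1
            rw [show k'-(a'+1) = E from rfl] at i2
            rw [show n - a' = (n - (a'+1)) + 1 from by omega,
                show k' - a' = E + 1 from by omega,
                qbinom_succ_succ t (n - (a'+1)) E] at i3
            have hp : t^(k'+1) = t^(a'+1) * t^(E+1) := by
              rw [← pow_add]; congr 1; omega
            linear_combination (t^(k'+1)) * i1 + (t^(a'+1)) * i2 + i3 +
              (qbinom t n (a'+1) * qbinom t (n-(a'+1)) (E+1)) * hp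

lemma qbinom_swap (M l b : ℕ) :
    qbinom t M l * qbinom t (M-l) b = qbinom t M b * qbinom t (M-b) l := by
  have h1 := qbinom_trinom t M (l+b) l (by omega)
  have h2 := qbinom_trinom t M (l+b) b (by omega)
  rw [show l + b - l = b from by omega] at h1
  rw [show l + b - b = l from by omega] at h2
  have hsym : qbinom t (l+b) l = qbinom t (l+b) b := by
    rw [← qbinom_symm t (l+b) b (by omega)]
    congr 1
    omega
  rw [← h1, ← h2, hsym]

lemma two_dvd_mul_pred (n : ℕ) : 2 ∣ n * (n - 1) := by
  cases n with
  | zero => simp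
  | succ n =>
    simpa [Nat.succ_sub_one, mul_comm] using (Nat.even_mul_succ_self n).two_dvd

lemma tri_add (s l : ℕ) :
    (s+l) * ((s+l) - 1) / 2 = s * (s-1) / 2 + l * (l-1) / 2 + s * l := by
  have H : (s+l) * ((s+l) - 1) = s*(s-1) + l*(l-1) + 2*(s*l) := by
    cases s with
    | zero => simp
    | succ s =>
      cases l with
      | zero => simp
      | succ l =>
        rw [show s+1+(l+1) - 1 = s + l + 1 from by omega,
            Nat.succ_sub_one, Nat.succ_sub_one]
        ring
  have h3 := two_dvd_mul_pred (s+l)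
  have h4 := two_dvd_mul_pred s
  have h5 := two_dvd_mul_pred l
  omega

lemma qbinom_genfun (m : ℕ) : ∀ x : K,
    ∑ l ∈ Finset.range (m+1), (-1:K)^l * qbinom t m l * t^(l*(l-1)/2) * x^l
      = ∏ i ∈ Finset.range m, (1 - t^i * x) := by
  induction m with
  | zero => intro x; simp
  | succ m ih =>
    intro x
    set h : ℕ → K := fun l => (-1:K)^l * qbinom t m l * t^(l*(l-1)/2) * (t*x)^l with hh
    have key : ∀ l, (-1:K)^(l+1) * qbinom t (m+1) (l+1) * t^((l+1)*((l+1)-1)/2) * x^(l+1)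
        = h (l+1) + (-x) * h l := by
      intro l
      have e1 : (l+1)*((l+1)-1)/2 = l*(l-1)/2 + l := by
        have := tri_add l 1
        omega
      simp only [hh, qbinom_succ_succ]
      rw [e1, pow_add, mul_pow]
      ring
    rw [Finset.sum_range_succ' (fun l => (-1:K)^l * qbinom t (m+1) l * t^(l*(l-1)/2) * x^l) (m+1)]
    simp only [key]
    rw [Finset.sum_add_distrib]
    have A : ∑ l ∈ Finset.range (m+1), h (l+1)
        = ∑ l ∈ Finset.range (m+2), h l - h 0 := by
      rw [Finset.sum_range_succ' h (m+1)]
      ring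
    have B : ∑ l ∈ Finset.range (m+2), h l = ∏ i ∈ Finset.range m, (1 - t^i * (t*x)) := by
      rw [Finset.sum_range_succ, hh]
      simp only []
      rw [qbinom_eq_zero t (n := m) (k := m+1) (by omega)]
      rw [← ih (t*x)]
      ring
    have h0 : h 0 = 1 := by simp [hh]
    have C : ∑ l ∈ Finset.range (m+1), (-x) * h l = -x * ∏ i ∈ Finset.range m, (1 - t^i * (t*x)) := by
      rw [← Finset.mul_sum, hh, ih (t*x)]
    rw [A, B, C, h0]
    have : ∀ l : ℕ, (-1:K)^0 * qbinom t (m+1) 0 * t^(0*(0-1)/2) * x^0 = 1 := by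
      intro _; simp
    rw [this 0]
    rw [Finset.prod_range_succ' (fun i => 1 - t^i * x) m]
    have : ∀ i : ℕ, 1 - t^i * (t*x) = 1 - t^(i+1) * x := by
      intro i; rw [pow_succ]; ring
    simp only [this]
    ring

lemma key1 (p r : K) (N m s : ℕ) (hm : 1 ≤ m) (hms : m + s ≤ N)
    (hpr : p * r * t^(N-1) = 1) :
    ∑ l ∈ Finset.range (m+1),
      ((-1:K)^(s+l) * qbinom t N (s+l) * t^((s+l)*((s+l)-1)/2) * p^(s+l)) *
      (qbinom t (s+l) l * qbinom t (N-(s+l)) (m-l) * r^l * t^(l*(N-m-s))) = 0 := by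
  set x : K := p * r * t^(N-m) with hx
  set K0 : K := (-1:K)^s * qbinom t N s * qbinom t (N-s) m * t^(s*(s-1)/2) * p^s with hK0
  have step : ∀ l ∈ Finset.range (m+1),
      ((-1:K)^(s+l) * qbinom t N (s+l) * t^((s+l)*((s+l)-1)/2) * p^(s+l)) *
      (qbinom t (s+l) l * qbinom t (N-(s+l)) (m-l) * r^l * t^(l*(N-m-s)))
      = K0 * ((-1:K)^l * qbinom t m l * t^(l*(l-1)/2) * x^l) := by
    intro l hl
    have hlm : l ≤ m := by simpa using Nat.lt_succ_iff.mp (Finset.mem_range.mp hl)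
    have b1 : qbinom t (s+l) l = qbinom t (s+l) s := by
      rw [← qbinom_symm t (s+l) s (by omega)]
      congr 1
      omega
    have b2 := qbinom_trinom t N (s+l) s (by omega)
    rw [show s+l-s = l from by omega] at b2
    have b3 := qbinom_trinom t (N-s) m l hlm
    rw [show N-s-l = N-(s+l) from by omega] at b3
    have bb : qbinom t N (s+l) * qbinom t (s+l) l * qbinom t (N-(s+l)) (m-l)
        = qbinom t N s * qbinom t (N-s) m * qbinom t m l := by
      rw [b1]
      linear_combination qbinom t (N-(s+l)) (m-l) * b2 - qbinom t N s * b3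
    have e1 : t^((s+l)*((s+l)-1)/2) = t^(s*(s-1)/2) * t^(l*(l-1)/2) * t^(s*l) := by
      rw [tri_add, pow_add, pow_add]
    have he2 : (t^(N-m))^l = t^(s*l) * t^(l*(N-m-s)) := by
      rw [← pow_mul, ← pow_add]
      congr 1
      obtain ⟨c, hc1, hc2⟩ : ∃ c, N-m-s = c ∧ N-m = s+c := ⟨_, rfl, by omega⟩
      rw [hc1, hc2]
      ring
    rw [hx, hK0, e1, mul_pow, mul_pow, he2]
    linear_combination ((-1:K)^s * (-1:K)^l * t^(s*(s-1)/2) * t^(l*(l-1)/2) * t^(s*l)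
        * p^s * p^l * r^l * t^(l*(N-m-s))) * bb
  rw [Finset.sum_congr rfl step, ← Finset.mul_sum, qbinom_genfun]
  have hmem : m - 1 ∈ Finset.range m := by
    simp
    omega
  rw [Finset.prod_eq_zero hmem, mul_zero]
  have : t^(m-1) * x = 1 := by
    rw [hx, show t^(m-1) * (p*r*t^(N-m)) = p*r*(t^(m-1)*t^(N-m)) from by ring,
        ← pow_add, show m-1+(N-m) = N-1 from by omega]
    exact hpr
  rw [this]
  ring

lemma key2 (p : K) (N a b : ℕ) (hab : a + b < N) :
    ∑ l ∈ Finset.range ((N-a-b)+1),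
      ((-1:K)^(a+l) * qbinom t N (a+l) * t^((a+l)*((a+l)-1)/2) * p^(a+l)) *
      (qbinom t (a+l) a * qbinom t (N-(a+l)) b * p^(N-(a+l)-b) * t^(a*(N-(a+l)-b))) = 0 := by
  set M : ℕ := N - a - b with hM
  have hM1 : 1 ≤ M := by omega
  set K0 : K := (-1:K)^a * qbinom t N a * qbinom t (N-a) b * t^(a*(a-1)/2) * t^(a*M) * p^(a+M)
    with hK0
  have step : ∀ l ∈ Finset.range (M+1),
      ((-1:K)^(a+l) * qbinom t N (a+l) * t^((a+l)*((a+l)-1)/2) * p^(a+l)) *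
      (qbinom t (a+l) a * qbinom t (N-(a+l)) b * p^(N-(a+l)-b) * t^(a*(N-(a+l)-b)))
      = K0 * ((-1:K)^l * qbinom t M l * t^(l*(l-1)/2) * (1:K)^l) := by
    intro l hl
    have hlM : l ≤ M := by simpa using Nat.lt_succ_iff.mp (Finset.mem_range.mp hl)
    have b2 := qbinom_trinom t N (a+l) a (by omega)
    rw [show a+l-a = l from by omega] at b2
    have b3 := qbinom_swap t (N-a) l b
    rw [show N-a-l = N-(a+l) from by omega, show N-a-b = M from rfl] at b3
    have bb : qbinom t N (a+l) * qbinom t (a+l) a * qbinom t (N-(a+l)) b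
        = qbinom t N a * qbinom t (N-a) b * qbinom t M l := by
      linear_combination qbinom t (N-(a+l)) b * b2 + qbinom t N a * b3
    have e1 : t^((a+l)*((a+l)-1)/2) = t^(a*(a-1)/2) * t^(l*(l-1)/2) * t^(a*l) := by
      rw [tri_add, pow_add, pow_add]
    have e2 : N-(a+l)-b = M-l := by omega
    have e3 : t^(a*l) * t^(a*(M-l)) = t^(a*M) := by
      rw [← pow_add]
      congr 1
      obtain ⟨c, hc1, hc2⟩ : ∃ c, M - l = c ∧ M = l + c := ⟨_, rfl, by omega⟩
      rw [hc1, hc2]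
      ring
    have e4 : p^(a+l) * p^(M-l) = p^(a+M) := by
      rw [← pow_add]
      congr 1
      omega
    rw [e1, e2, hK0]
    calc ((-1:K)^(a+l) * qbinom t N (a+l) * (t^(a*(a-1)/2) * t^(l*(l-1)/2) * t^(a*l)) * p^(a+l)) *
      (qbinom t (a+l) a * qbinom t (N-(a+l)) b * p^(M-l) * t^(a*(M-l)))
        = (qbinom t N (a+l) * qbinom t (a+l) a * qbinom t (N-(a+l)) b) *
          ((-1:K)^(a+l) * t^(a*(a-1)/2) * t^(l*(l-1)/2) * (t^(a*l) * t^(a*(M-l))) *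
           (p^(a+l) * p^(M-l))) := by ring
      _ = (qbinom t N a * qbinom t (N-a) b * qbinom t M l) *
          ((-1:K)^(a+l) * t^(a*(a-1)/2) * t^(l*(l-1)/2) * t^(a*M) * p^(a+M)) := by
            rw [bb, e3, e4]
      _ = (-1:K)^a * qbinom t N a * qbinom t (N-a) b * t^(a*(a-1)/2) * t^(a*M) * p^(a+M) *
          ((-1:K)^l * qbinom t M l * t^(l*(l-1)/2) * (1:K)^l) := by
            rw [pow_add (-1:K) a l]
            ring
  rw [Finset.sum_congr rfl step, ← Finset.mul_sum, qbinom_genfun]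
  have hmem : 0 ∈ Finset.range M := by
    simp
    omega
  rw [Finset.prod_eq_zero hmem]
  · ring
  · simp

section QComm
variable {K : Type*} [Field K] {A : Type*} [Ring A] [Algebra K A]

lemma qcomm_pow_right (s : K) {w x : A} (h : w * x = s • (x * w)) (c : ℕ) :
    w * x^c = s^c • (x^c * w) := by
  induction c with
  | zero => simp
  | succ c ih =>
    rw [pow_succ, ← mul_assoc, ih, smul_mul_assoc, mul_assoc, h, mul_smul_comm,
        smul_smul, ← pow_succ, ← mul_assoc, ← pow_succ]

lemma qcomm_pow_pow (s : K) {w x : A} (h : w * x = s • (x * w)) (a c : ℕ) :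
    w^a * x^c = s^(a*c) • (x^c * w^a) := by
  induction a with
  | zero => simp
  | succ a ih =>
    have h1 : w * x^c = s^c • (x^c * w) := qcomm_pow_right s h c
    rw [pow_succ, mul_assoc, h1, mul_smul_comm, ← mul_assoc, ih, smul_mul_assoc,
        smul_smul, mul_assoc, ← pow_succ, ← pow_add,
        show c + a*c = (a+1)*c from by ring]

lemma qbinom_expansion (t : K) {x y : A} (h : y * x = t • (x * y)) (n : ℕ) :
    (x + y)^n = ∑ m ∈ Finset.range (n+1), qbinom t n m • (x^(n-m) * y^m) := by
  induction n with
  | zero => simp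
  | succ n ih =>
    have hy : ∀ m : ℕ, (y^m) * x = (t^m) • (x * y^m) := by
      intro m
      have := qcomm_pow_pow t h m 1
      simpa using this
    rw [pow_succ, ih, Finset.sum_mul]
    set g : ℕ → A := fun m => (t^m * qbinom t n m) • (x^(n+1-m) * y^m) with hg
    have step : ∀ m ∈ Finset.range (n+1),
        (qbinom t n m • (x^(n-m) * y^m)) * (x + y)
          = g m + qbinom t n m • (x^(n-m) * y^(m+1)) := by
      intro m hm
      have hmn : m ≤ n := by simpa using Nat.lt_succ_iff.mp (Finset.mem_range.mp hm)
      rw [mul_add, hg]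
      congr 1
      · rw [smul_mul_assoc, mul_assoc, hy m, mul_smul_comm, smul_smul,
            ← mul_assoc, ← pow_succ, show n - m + 1 = n + 1 - m from by omega,
            mul_comm (qbinom t n m) (t^m)]
      · rw [smul_mul_assoc, mul_assoc, ← pow_succ]
    rw [Finset.sum_congr rfl step, Finset.sum_add_distrib]
    rw [Finset.sum_range_succ' (fun m => qbinom t (n+1) m • (x^(n+1-m)*y^m)) (n+1)]
    have hps : ∀ m, qbinom t (n+1) (m+1) • (x^(n+1-(m+1)) * y^(m+1))
        = g (m+1) + qbinom t n m • (x^(n-m) * y^(m+1)) := by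
      intro m
      rw [qbinom_succ_succ, add_smul, hg]
      congr 2
      rw [show n+1-(m+1) = n - m from by omega]
    simp only [hps]
    rw [Finset.sum_add_distrib]
    have e0 : qbinom t (n+1) 0 • (x^(n+1-0) * y^0) = g 0 := by
      rw [hg]
      simp
    rw [e0]
    have htop : g (n+1) = 0 := by
      rw [hg]
      simp only []
      rw [qbinom_eq_zero t (n := n) (k := n+1) (by omega)]
      simp
    have hA : ∑ m ∈ Finset.range (n+1), g m = (∑ m ∈ Finset.range n, g (m+1)) + g 0 :=
      Finset.sum_range_succ' g n
    have hB : ∑ m ∈ Finset.range (n+1), g (m+1) = (∑ m ∈ Finset.range n, g (m+1)) + g (n+1) :=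
      Finset.sum_range_succ (fun m => g (m+1)) n
    rw [hA, hB, htop]
    abel

end QComm

section Comp
variable {K : Type*} [Field K] {H : Type*} [Ring H] [Algebra K H]
variable (t p r : K) (F G Om Ps : H)

lemma comp1
    (hOmF' : ∀ (a c : ℕ) (z : H), Om^a * (F^c * z) = t^(a*c) • (F^c * (Om^a * z)))
    (hOmG' : ∀ (a : ℕ) (z : H), Om^a * (G * z) = r^a • (G * (Om^a * z)))
    (u b K1 K2 : ℕ) :
    (F^K1 * Om^u) * G * (F^K2 * Om^b)
      = (r^u * t^(u*K2)) • (F^K1 * G * F^K2 * Om^(u+b)) := by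
  have e : Om ^ u * Om ^ b = Om ^ (u + b) := (pow_add Om u b).symm
  calc (F^K1 * Om^u) * G * (F^K2 * Om^b)
      = F^K1 * (Om^u * (G * (F^K2 * Om^b))) := by
        rw [mul_assoc (F^K1) (Om^u) G, mul_assoc, mul_assoc (Om^u) G]
    _ = F^K1 * (r^u • (G * (Om^u * (F^K2 * Om^b)))) := by rw [hOmG' u]
    _ = F^K1 * (r^u • (G * (t^(u*K2) • (F^K2 * (Om^u * Om^b))))) := by rw [hOmF' u K2]
    _ = (r^u * t^(u*K2)) • (F^K1 * G * F^K2 * Om^(u+b)) := by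
        rw [e]
        simp only [mul_smul_comm, smul_smul, mul_assoc]

lemma comp2
    (hOmF' : ∀ (a c : ℕ) (z : H), Om^a * (F^c * z) = t^(a*c) • (F^c * (Om^a * z)))
    (hPsF' : ∀ (c : ℕ) (z : H), Ps * (F^c * z) = p^c • (F^c * (Ps * z)))
    (hOP : Om * Ps = Ps * Om)
    (u b K1 K2 : ℕ) :
    (F^K1 * Om^u) * Ps * (F^K2 * Om^b)
      = (p^K2 * t^(u*K2)) • (F^K1 * F^K2 * Om^(u+b) * Ps) := by
  have hPsOm : ∀ b : ℕ, Ps * Om^b = Om^b * Ps := fun b =>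
    ((Commute.pow_right (show Commute Ps Om from hOP.symm) b).eq)
  calc (F^K1 * Om^u) * Ps * (F^K2 * Om^b)
      = F^K1 * (Om^u * (Ps * (F^K2 * Om^b))) := by
        rw [mul_assoc (F^K1) (Om^u) Ps, mul_assoc, mul_assoc (Om^u) Ps]
    _ = F^K1 * (Om^u * (p^K2 • (F^K2 * (Ps * Om^b)))) := by rw [hPsF' K2]
    _ = F^K1 * (Om^u * (p^K2 • (F^K2 * (Om^b * Ps)))) := by rw [hPsOm b]
    _ = F^K1 * (p^K2 • (Om^u * (F^K2 * (Om^b * Ps)))) := by rw [mul_smul_comm]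
    _ = F^K1 * (p^K2 • (t^(u*K2) • (F^K2 * (Om^u * (Om^b * Ps))))) := by rw [hOmF' u K2]
    _ = (p^K2 * t^(u*K2)) • (F^K1 * F^K2 * Om^(u+b) * Ps) := by
        rw [← mul_assoc (Om^u) (Om^b) Ps, ← pow_add]
        simp only [mul_smul_comm, smul_smul, mul_assoc]

end Comp

section Main
variable {K : Type*} [Field K] {H : Type*} [Ring H] [Algebra K H]

/-- The scalar coefficient in the quantum Serre element. -/
def auxc (t p : K) (N k : ℕ) : K := (-1:K)^k * qbinom t N k * t^(k*(k-1)/2) * p^k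

/-- Type-1 term in the expansion of `Δ(F^k) Δ(G) Δ(F^{N-k})`. -/
noncomputable def auxT1 (t r : K) (F G Om : H) (N k u b : ℕ) : TensorProduct K H H :=
  (qbinom t k u * qbinom t (N-k) b * r^u * t^(u*(N-k-b))) •
    ((F^(u+b)) ⊗ₜ[K] (F^(k-u) * G * F^(N-k-b) * Om^(u+b)))

/-- Type-2 term in the expansion of `Δ(F^k) Δ(G) Δ(F^{N-k})`. -/
noncomputable def auxT2 (t p : K) (F G Om Ps : H) (N k u b : ℕ) : TensorProduct K H H :=
  (qbinom t k u * qbinom t (N-k) b * p^(N-k-b) * t^(u*(N-k-b))) •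
    ((F^u * G * F^b) ⊗ₜ[K] (F^((k-u)+(N-k-b)) * Om^(u+b) * Ps))

end Main

section MainThm
open Finset
variable {K : Type*} [Field K] {H : Type*} [Ring H] [Bialgebra K H]

theorem main_aux (t p r : K) (F G Om Ps : H) (N : ℕ) (hN : 1 ≤ N)
    (hpr : p * r * t^(N-1) = 1)
    (hΔF : Coalgebra.comul (R := K) F = 1 ⊗ₜ[K] F + F ⊗ₜ[K] Om)
    (hΔG : Coalgebra.comul (R := K) G = 1 ⊗ₜ[K] G + G ⊗ₜ[K] Ps)
    (hOF : Om * F = t • (F * Om)) (hOG : Om * G = r • (G * Om))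
    (hPF : Ps * F = p • (F * Ps)) (hOP : Om * Ps = Ps * Om) :
    Coalgebra.comul (R := K)
      (∑ k ∈ range (N+1), auxc t p N k • (F^k * G * F^(N-k)))
    = (∑ k ∈ range (N+1), auxc t p N k • (F^k * G * F^(N-k))) ⊗ₜ[K] (Om^N * Ps)
      + (1:H) ⊗ₜ[K] (∑ k ∈ range (N+1), auxc t p N k • (F^k * G * F^(N-k))) := by
  have hcomul : ∀ z : H, Coalgebra.comul (R := K) z = Bialgebra.comulAlgHom K H z :=
    fun z => (Bialgebra.comulAlgHom_apply K H z).symm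
  set Δ : H →ₐ[K] TensorProduct K H H := Bialgebra.comulAlgHom K H with hΔdef
  rw [hcomul]
  -- commutation rules
  have hOmF : ∀ a cc : ℕ, Om^a * F^cc = t^(a*cc) • (F^cc * Om^a) := qcomm_pow_pow t hOF
  have hOmF' : ∀ (a cc : ℕ) (z : H), Om^a * (F^cc * z) = t^(a*cc) • (F^cc * (Om^a * z)) := by
    intro a cc z
    rw [← mul_assoc, hOmF, smul_mul_assoc, mul_assoc]
  have hOmG1 : ∀ a : ℕ, Om^a * G = r^a • (G * Om^a) := by
    intro a
    have := qcomm_pow_pow r hOG a 1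
    simpa using this
  have hOmG' : ∀ (a : ℕ) (z : H), Om^a * (G * z) = r^a • (G * (Om^a * z)) := by
    intro a z
    rw [← mul_assoc, hOmG1, smul_mul_assoc, mul_assoc]
  have hPsF1 : ∀ cc : ℕ, Ps * F^cc = p^cc • (F^cc * Ps) := qcomm_pow_right p hPF
  have hPsF' : ∀ (cc : ℕ) (z : H), Ps * (F^cc * z) = p^cc • (F^cc * (Ps * z)) := by
    intro cc z
    rw [← mul_assoc, hPsF1, smul_mul_assoc, mul_assoc]
  -- comultiplication of powers of F
  have hDF : Δ F = 1 ⊗ₜ[K] F + F ⊗ₜ[K] Om := by rw [← hcomul]; exact hΔF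
  have hDG : Δ G = 1 ⊗ₜ[K] G + G ⊗ₜ[K] Ps := by rw [← hcomul]; exact hΔG
  have hxy : (F ⊗ₜ[K] Om) * ((1:H) ⊗ₜ[K] F) = t • (((1:H) ⊗ₜ[K] F) * (F ⊗ₜ[K] Om)) := by
    simp only [Algebra.TensorProduct.tmul_mul_tmul, mul_one, one_mul, hOF,
      TensorProduct.tmul_smul]
  have hΔFn : ∀ n : ℕ,
      Δ (F^n) = ∑ m ∈ range (n+1), qbinom t n m • ((F^m) ⊗ₜ[K] (F^(n-m) * Om^m)) := by
    intro n
    rw [map_pow, hDF, qbinom_expansion t hxy n]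
    refine Finset.sum_congr rfl fun m hm => ?_
    congr 1
    rw [Algebra.TensorProduct.tmul_pow, Algebra.TensorProduct.tmul_pow,
        Algebra.TensorProduct.tmul_mul_tmul, one_pow, one_mul]
  -- the product formula
  have hProd : ∀ k : ℕ, Δ (F^k) * Δ G * Δ (F^(N-k))
      = ∑ u ∈ range (k+1), ∑ b ∈ range (N-k+1),
          (auxT1 t r F G Om N k u b + auxT2 t p F G Om Ps N k u b) := by
    intro k
    rw [hΔFn k, hΔFn (N-k), hDG, Finset.sum_mul, Finset.sum_mul]
    refine Finset.sum_congr rfl fun u hu => ?_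
    rw [Finset.mul_sum]
    refine Finset.sum_congr rfl fun b hb => ?_
    rw [smul_mul_assoc, smul_mul_assoc, mul_smul_comm, smul_smul]
    rw [mul_add, add_mul]
    rw [Algebra.TensorProduct.tmul_mul_tmul, Algebra.TensorProduct.tmul_mul_tmul,
        Algebra.TensorProduct.tmul_mul_tmul, Algebra.TensorProduct.tmul_mul_tmul]
    rw [comp1 t r F G Om hOmF' hOmG' u b (k-u) (N-k-b),
        comp2 t p F Om Ps hOmF' hPsF' hOP u b (k-u) (N-k-b)]
    rw [auxT1, auxT2]
    rw [mul_one, ← pow_add, pow_add F (k-u) (N-k-b)]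
    rw [TensorProduct.tmul_smul, TensorProduct.tmul_smul, smul_add, smul_smul, smul_smul]
    congr 2
    · ring
    · ring
  rw [map_sum]
  have hterm : ∀ k ∈ range (N+1), Δ (auxc t p N k • (F^k * G * F^(N-k)))
      = ∑ u ∈ range (k+1), ∑ b ∈ range (N-k+1),
          (auxc t p N k • auxT1 t r F G Om N k u b + auxc t p N k • auxT2 t p F G Om Ps N k u b) := by
    intro k _
    rw [map_smul, map_mul, map_mul, hProd k, Finset.smul_sum]
    refine Finset.sum_congr rfl fun u _ => ?_
    rw [Finset.smul_sum]
    refine Finset.sum_congr rfl fun b _ => ?_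
    rw [smul_add]
  rw [Finset.sum_congr rfl hterm]
  have hsplit : ∑ k ∈ range (N+1), ∑ u ∈ range (k+1), ∑ b ∈ range (N-k+1),
        (auxc t p N k • auxT1 t r F G Om N k u b + auxc t p N k • auxT2 t p F G Om Ps N k u b)
      = (∑ k ∈ range (N+1), ∑ u ∈ range (k+1), ∑ b ∈ range (N-k+1),
          auxc t p N k • auxT1 t r F G Om N k u b)
      + (∑ k ∈ range (N+1), ∑ u ∈ range (k+1), ∑ b ∈ range (N-k+1),
          auxc t p N k • auxT2 t p F G Om Ps N k u b) := by
    rw [← Finset.sum_add_distrib]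
    refine Finset.sum_congr rfl fun k _ => ?_
    rw [← Finset.sum_add_distrib]
    refine Finset.sum_congr rfl fun u _ => ?_
    rw [← Finset.sum_add_distrib]
  rw [hsplit]
  have hS1 : (∑ k ∈ range (N+1), ∑ u ∈ range (k+1), ∑ b ∈ range (N-k+1),
        auxc t p N k • auxT1 t r F G Om N k u b)
      = (1:H) ⊗ₜ[K] (∑ k ∈ range (N+1), auxc t p N k • (F^k * G * F^(N-k))) := by
    have A1a : ∀ k : ℕ, (∑ u ∈ range (k+1), ∑ b ∈ range (N-k+1),
          auxc t p N k • auxT1 t r F G Om N k u b)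
        = ∑ y ∈ (range (k+1)).sigma (fun _ => range (N-k+1)),
            auxc t p N k • auxT1 t r F G Om N k y.1 y.2 :=
      fun k => Finset.sum_sigma' _ _ _
    have A1b := Finset.sum_sigma' (range (N+1))
      (fun k => (range (k+1)).sigma fun _ => range (N-k+1))
      (fun k (y : (_ : ℕ) × ℕ) => auxc t p N k • auxT1 t r F G Om N k y.1 y.2)
    have A3 := Finset.sum_sigma' (range (N+1))
      (fun m => (range (N-m+1)).sigma fun _ => range (m+1))
      (fun m (y : (_ : ℕ) × ℕ) =>
        auxc t p N (y.1+y.2) • auxT1 t r F G Om N (y.1+y.2) y.2 (m - y.2))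
    have A3a : ∀ m : ℕ, (∑ y ∈ (range (N-m+1)).sigma (fun _ => range (m+1)),
          auxc t p N (y.1+y.2) • auxT1 t r F G Om N (y.1+y.2) y.2 (m - y.2))
        = ∑ s ∈ range (N-m+1), ∑ l ∈ range (m+1),
            auxc t p N (s+l) • auxT1 t r F G Om N (s+l) l (m-l) :=
      fun m => (Finset.sum_sigma' (range (N-m+1)) (fun _ => range (m+1))
        (fun s l => auxc t p N (s+l) • auxT1 t r F G Om N (s+l) l (m-l))).symm
    have A2 : (∑ x ∈ (range (N+1)).sigma (fun k => (range (k+1)).sigma fun _ => range (N-k+1)),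
          auxc t p N x.1 • auxT1 t r F G Om N x.1 x.2.1 x.2.2)
        = ∑ x ∈ (range (N+1)).sigma (fun m => (range (N-m+1)).sigma fun _ => range (m+1)),
          auxc t p N (x.2.1 + x.2.2) • auxT1 t r F G Om N (x.2.1 + x.2.2) x.2.2 (x.1 - x.2.2) := by
      refine Finset.sum_bij' (fun x _ => ⟨x.2.1 + x.2.2, x.1 - x.2.1, x.2.1⟩)
        (fun x _ => ⟨x.2.1 + x.2.2, x.2.2, x.1 - x.2.2⟩) ?_ ?_ ?_ ?_ ?_
      · rintro ⟨k, u, b⟩ hx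
        simp only [Finset.mem_sigma, Finset.mem_range] at hx ⊢
        omega
      · rintro ⟨m, s, l⟩ hx
        simp only [Finset.mem_sigma, Finset.mem_range] at hx ⊢
        omega
      · rintro ⟨k, u, b⟩ hx
        simp only [Finset.mem_sigma, Finset.mem_range] at hx
        have e1 : k - u + u = k := by omega
        have e2 : u + b - u = b := by omega
        simp [e1, e2]
      · rintro ⟨m, s, l⟩ hx
        simp only [Finset.mem_sigma, Finset.mem_range] at hx
        have e1 : s + l - l = s := by omega
        have e2 : l + (m - l) = m := by omega
        simp [e1, e2]
      · rintro ⟨k, u, b⟩ hx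
        simp only [Finset.mem_sigma, Finset.mem_range] at hx
        have e1 : k - u + u = k := by omega
        have e2 : u + b - u = b := by omega
        rw [e1, e2]
    have inner : ∀ m ∈ range (N+1), ∀ s ∈ range (N-m+1),
        (∑ l ∈ range (m+1), auxc t p N (s+l) • auxT1 t r F G Om N (s+l) l (m-l))
        = (∑ l ∈ range (m+1), auxc t p N (s+l) *
            (qbinom t (s+l) l * qbinom t (N-(s+l)) (m-l) * r^l * t^(l*(N-m-s)))) •
          ((F^m) ⊗ₜ[K] (F^s * G * F^(N-m-s) * Om^m)) := by
      intro m hm s hs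
      rw [Finset.sum_smul]
      refine Finset.sum_congr rfl fun l hl => ?_
      simp only [Finset.mem_range] at hm hs hl
      simp only [auxT1]
      rw [show l + (m-l) = m from by omega, show s + l - l = s from by omega,
          show N - (s+l) - (m-l) = N - m - s from by omega, smul_smul]
    calc (∑ k ∈ range (N+1), ∑ u ∈ range (k+1), ∑ b ∈ range (N-k+1),
            auxc t p N k • auxT1 t r F G Om N k u b)
        = ∑ k ∈ range (N+1), ∑ y ∈ (range (k+1)).sigma (fun _ => range (N-k+1)),
            auxc t p N k • auxT1 t r F G Om N k y.1 y.2 :=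
          Finset.sum_congr rfl fun k _ => A1a k
      _ = ∑ x ∈ (range (N+1)).sigma (fun k => (range (k+1)).sigma fun _ => range (N-k+1)),
            auxc t p N x.1 • auxT1 t r F G Om N x.1 x.2.1 x.2.2 := A1b
      _ = ∑ x ∈ (range (N+1)).sigma (fun m => (range (N-m+1)).sigma fun _ => range (m+1)),
            auxc t p N (x.2.1 + x.2.2) •
              auxT1 t r F G Om N (x.2.1 + x.2.2) x.2.2 (x.1 - x.2.2) := A2
      _ = ∑ m ∈ range (N+1), ∑ y ∈ (range (N-m+1)).sigma (fun _ => range (m+1)),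
            auxc t p N (y.1+y.2) • auxT1 t r F G Om N (y.1+y.2) y.2 (m - y.2) := A3.symm
      _ = ∑ m ∈ range (N+1), ∑ s ∈ range (N-m+1), ∑ l ∈ range (m+1),
            auxc t p N (s+l) • auxT1 t r F G Om N (s+l) l (m-l) :=
          Finset.sum_congr rfl fun m _ => A3a m
      _ = ∑ m ∈ range (N+1), ∑ s ∈ range (N-m+1),
            (∑ l ∈ range (m+1), auxc t p N (s+l) *
              (qbinom t (s+l) l * qbinom t (N-(s+l)) (m-l) * r^l * t^(l*(N-m-s)))) •
            ((F^m) ⊗ₜ[K] (F^s * G * F^(N-m-s) * Om^m)) :=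
          Finset.sum_congr rfl fun m hm => Finset.sum_congr rfl fun s hs => inner m hm s hs
      _ = ∑ s ∈ range (N-0+1),
            (∑ l ∈ range (0+1), auxc t p N (s+l) *
              (qbinom t (s+l) l * qbinom t (N-(s+l)) (0-l) * r^l * t^(l*(N-0-s)))) •
            ((F^(0:ℕ)) ⊗ₜ[K] (F^s * G * F^(N-0-s) * Om^(0:ℕ))) := by
          refine Finset.sum_eq_single_of_mem 0 (Finset.mem_range.mpr (by omega)) ?_
          intro m hm hm0
          refine Finset.sum_eq_zero fun s hs => ?_
          have h1 : (∑ l ∈ range (m+1), auxc t p N (s+l) *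
              (qbinom t (s+l) l * qbinom t (N-(s+l)) (m-l) * r^l * t^(l*(N-m-s)))) = 0 := by
            simp only [auxc]
            refine key1 t p r N m s (by omega) ?_ hpr
            simp only [Finset.mem_range] at hs hm
            omega
          rw [h1, zero_smul]
      _ = (1:H) ⊗ₜ[K] (∑ k ∈ range (N+1), auxc t p N k • (F^k * G * F^(N-k))) := by
          rw [TensorProduct.tmul_sum]
          refine Finset.sum_congr rfl fun s hs => ?_
          rw [Finset.sum_range_one]
          simp [TensorProduct.tmul_smul]
  have hS2 : (∑ k ∈ range (N+1), ∑ u ∈ range (k+1), ∑ b ∈ range (N-k+1),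
        auxc t p N k • auxT2 t p F G Om Ps N k u b)
      = (∑ k ∈ range (N+1), auxc t p N k • (F^k * G * F^(N-k))) ⊗ₜ[K] (Om^N * Ps) := by
    have B1a : ∀ k : ℕ, (∑ u ∈ range (k+1), ∑ b ∈ range (N-k+1),
          auxc t p N k • auxT2 t p F G Om Ps N k u b)
        = ∑ y ∈ (range (k+1)).sigma (fun _ => range (N-k+1)),
            auxc t p N k • auxT2 t p F G Om Ps N k y.1 y.2 :=
      fun k => Finset.sum_sigma' _ _ _
    have B1b := Finset.sum_sigma' (range (N+1))
      (fun k => (range (k+1)).sigma fun _ => range (N-k+1))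
      (fun k (y : (_ : ℕ) × ℕ) => auxc t p N k • auxT2 t p F G Om Ps N k y.1 y.2)
    have B3 := Finset.sum_sigma' (range (N+1))
      (fun u => (range (N-u+1)).sigma fun b => range (N-u-b+1))
      (fun u (y : (_ : ℕ) × ℕ) =>
        auxc t p N (u + y.2) • auxT2 t p F G Om Ps N (u + y.2) u y.1)
    have B3a : ∀ u : ℕ, (∑ y ∈ (range (N-u+1)).sigma (fun b => range (N-u-b+1)),
          auxc t p N (u + y.2) • auxT2 t p F G Om Ps N (u + y.2) u y.1)
        = ∑ b ∈ range (N-u+1), ∑ l ∈ range (N-u-b+1),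
            auxc t p N (u+l) • auxT2 t p F G Om Ps N (u+l) u b :=
      fun u => (Finset.sum_sigma' (range (N-u+1)) (fun b => range (N-u-b+1))
        (fun b l => auxc t p N (u+l) • auxT2 t p F G Om Ps N (u+l) u b)).symm
    have B2 : (∑ x ∈ (range (N+1)).sigma (fun k => (range (k+1)).sigma fun _ => range (N-k+1)),
          auxc t p N x.1 • auxT2 t p F G Om Ps N x.1 x.2.1 x.2.2)
        = ∑ x ∈ (range (N+1)).sigma (fun u => (range (N-u+1)).sigma fun b => range (N-u-b+1)),
          auxc t p N (x.1 + x.2.2) • auxT2 t p F G Om Ps N (x.1 + x.2.2) x.1 x.2.1 := by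
      refine Finset.sum_bij' (fun x _ => ⟨x.2.1, x.2.2, x.1 - x.2.1⟩)
        (fun x _ => ⟨x.1 + x.2.2, x.1, x.2.1⟩) ?_ ?_ ?_ ?_ ?_
      · rintro ⟨k, u, b⟩ hx
        simp only [Finset.mem_sigma, Finset.mem_range] at hx ⊢
        omega
      · rintro ⟨u, b, l⟩ hx
        simp only [Finset.mem_sigma, Finset.mem_range] at hx ⊢
        omega
      · rintro ⟨k, u, b⟩ hx
        simp only [Finset.mem_sigma, Finset.mem_range] at hx
        have e1 : u + (k - u) = k := by omega
        simp [e1]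
      · rintro ⟨u, b, l⟩ hx
        simp only [Finset.mem_sigma, Finset.mem_range] at hx
        have e1 : u + l - u = l := by omega
        simp [e1]
      · rintro ⟨k, u, b⟩ hx
        simp only [Finset.mem_sigma, Finset.mem_range] at hx
        have e1 : u + (k - u) = k := by omega
        rw [e1]
    have inner : ∀ u ∈ range (N+1), ∀ b ∈ range (N-u+1),
        (∑ l ∈ range (N-u-b+1), auxc t p N (u+l) • auxT2 t p F G Om Ps N (u+l) u b)
        = (∑ l ∈ range (N-u-b+1), auxc t p N (u+l) *
            (qbinom t (u+l) u * qbinom t (N-(u+l)) b * p^(N-(u+l)-b) * t^(u*(N-(u+l)-b)))) •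
          ((F^u * G * F^b) ⊗ₜ[K] (F^(N-u-b) * Om^(u+b) * Ps)) := by
      intro u hu b hb
      rw [Finset.sum_smul]
      refine Finset.sum_congr rfl fun l hl => ?_
      simp only [Finset.mem_range] at hu hb hl
      simp only [auxT2]
      rw [show u + l - u + (N - (u+l) - b) = N - u - b from by omega, smul_smul]
    calc (∑ k ∈ range (N+1), ∑ u ∈ range (k+1), ∑ b ∈ range (N-k+1),
            auxc t p N k • auxT2 t p F G Om Ps N k u b)
        = ∑ k ∈ range (N+1), ∑ y ∈ (range (k+1)).sigma (fun _ => range (N-k+1)),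
            auxc t p N k • auxT2 t p F G Om Ps N k y.1 y.2 :=
          Finset.sum_congr rfl fun k _ => B1a k
      _ = ∑ x ∈ (range (N+1)).sigma (fun k => (range (k+1)).sigma fun _ => range (N-k+1)),
            auxc t p N x.1 • auxT2 t p F G Om Ps N x.1 x.2.1 x.2.2 := B1b
      _ = ∑ x ∈ (range (N+1)).sigma (fun u => (range (N-u+1)).sigma fun b => range (N-u-b+1)),
            auxc t p N (x.1 + x.2.2) • auxT2 t p F G Om Ps N (x.1 + x.2.2) x.1 x.2.1 := B2
      _ = ∑ u ∈ range (N+1), ∑ y ∈ (range (N-u+1)).sigma (fun b => range (N-u-b+1)),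
            auxc t p N (u + y.2) • auxT2 t p F G Om Ps N (u + y.2) u y.1 := B3.symm
      _ = ∑ u ∈ range (N+1), ∑ b ∈ range (N-u+1), ∑ l ∈ range (N-u-b+1),
            auxc t p N (u+l) • auxT2 t p F G Om Ps N (u+l) u b :=
          Finset.sum_congr rfl fun u _ => B3a u
      _ = ∑ u ∈ range (N+1), ∑ b ∈ range (N-u+1),
            (∑ l ∈ range (N-u-b+1), auxc t p N (u+l) *
              (qbinom t (u+l) u * qbinom t (N-(u+l)) b * p^(N-(u+l)-b) * t^(u*(N-(u+l)-b)))) •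
            ((F^u * G * F^b) ⊗ₜ[K] (F^(N-u-b) * Om^(u+b) * Ps)) :=
          Finset.sum_congr rfl fun u hu => Finset.sum_congr rfl fun b hb => inner u hu b hb
      _ = ∑ u ∈ range (N+1),
            (∑ l ∈ range (N-u-(N-u)+1), auxc t p N (u+l) *
              (qbinom t (u+l) u * qbinom t (N-(u+l)) (N-u) * p^(N-(u+l)-(N-u)) *
                t^(u*(N-(u+l)-(N-u))))) •
            ((F^u * G * F^(N-u)) ⊗ₜ[K] (F^(N-u-(N-u)) * Om^(u+(N-u)) * Ps)) := by
          refine Finset.sum_congr rfl fun u hu => ?_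
          refine Finset.sum_eq_single_of_mem (N-u) (Finset.mem_range.mpr (by omega)) ?_
          intro b hb hbne
          simp only [Finset.mem_range] at hu hb
          have h1 : (∑ l ∈ range (N-u-b+1), auxc t p N (u+l) *
              (qbinom t (u+l) u * qbinom t (N-(u+l)) b * p^(N-(u+l)-b) * t^(u*(N-(u+l)-b)))) = 0 := by
            simp only [auxc]
            exact key2 t p N u b (by omega)
          rw [h1, zero_smul]
      _ = (∑ k ∈ range (N+1), auxc t p N k • (F^k * G * F^(N-k))) ⊗ₜ[K] (Om^N * Ps) := by
          rw [TensorProduct.sum_tmul]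
          refine Finset.sum_congr rfl fun u hu => ?_
          simp only [Finset.mem_range] at hu
          rw [show N - u - (N - u) = 0 from by omega, show u + (N - u) = N from by omega]
          rw [Finset.sum_range_one]
          simp [TensorProduct.smul_tmul']
  rw [hS1, hS2]
  rw [add_comm]
end MainThm

end Aux

/-- in the Hopf algebra `Ũ_q(g)` defined without Serre relations
(abstracted here as any bialgebra containing elements `f_i` and invertible
commuting group-likes `ω'_i` with `Δ(f_i) = 1 ⊗ f_i + f_i ⊗ ω'_i` and
`ω'_i f_j ω'^{-1}_i = q_{ji} f_j`, where `q_{ij}q_{ji} = q_{ii}^{a_{ij}}` for a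
symmetrizable GCM), the quantum Serre element `u_{ij}^-` satisfies
`Δ(u_{ij}^-) = u_{ij}^- ⊗ ω'_i^{1-a_{ij}} ω'_j + 1 ⊗ u_{ij}^-`. -/
theorem serreMinus_skew_primitive {K H I : Type*} [Field K] [Ring H]
    [Bialgebra K H] (a : I → I → ℤ) (qm : I → I → K)
    (hq0 : ∀ i j, qm i j ≠ 0)
    (hrel : ∀ i j, qm i j * qm j i = qm i i ^ (a i j))
    (f ω' : I → H) (hωu : ∀ i, IsUnit (ω' i))
    (hgl : ∀ i, Coalgebra.comul (R := K) (ω' i) = ω' i ⊗ₜ[K] ω' i)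
    (hcomm : ∀ i j, ω' i * ω' j = ω' j * ω' i)
    (hconj : ∀ i j, ω' i * f j = qm j i • (f j * ω' i))
    (hΔf : ∀ i, Coalgebra.comul (R := K) (f i) = 1 ⊗ₜ[K] f i + f i ⊗ₜ[K] ω' i)
    (i j : I) (hij : i ≠ j) (haij : a i j ≤ 0) :
    Coalgebra.comul (R := K) (serreMinus qm f (1 - a i j).toNat i j)
      = serreMinus qm f (1 - a i j).toNat i j ⊗ₜ[K]
          (ω' i ^ (1 - a i j).toNat * ω' j)
        + (1 : H) ⊗ₜ[K] serreMinus qm f (1 - a i j).toNat i j := by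
  
  set N := (1 - a i j).toNat with hNdef
  have hN : 1 ≤ N := by omega
  have ht0 : qm i i ≠ 0 := hq0 i i
  have hpr : qm i j * qm j i * (qm i i)^(N-1) = 1 := by
    have h1 := hrel i j
    calc qm i j * qm j i * qm i i ^ (N-1)
        = qm i i ^ (a i j) * qm i i ^ (((N-1:ℕ)):ℤ) := by rw [h1, zpow_natCast]
      _ = qm i i ^ (a i j + ((N-1:ℕ):ℤ)) := (zpow_add₀ ht0 _ _).symm
      _ = qm i i ^ (0:ℤ) := by
          congr 1
          omega
      _ = 1 := zpow_zero _
  have hserre : serreMinus qm f N i j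
      = ∑ k ∈ Finset.range (N+1),
          auxc (qm i i) (qm i j) N k • (f i ^ k * f j * f i ^ (N-k)) := rfl
  rw [hserre]
  exact main_aux (qm i i) (qm i j) (qm j i) (f i) (f j) (ω' i) (ω' j) N hN hpr
    (hΔf i) (hΔf j) (hconj i i) (hconj i j) (hconj j i) (hcomm i j)
end
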